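/- Let s be a similarity function with values in ℕ and let P be a graph polynomial with integer coefficients such that deg P(G;X) ≤ s(G) for every graph G. Then there exists a graph polynomial Q with integer coefficients, d.p.-equivalent to P, such that for every graph G the polynomial Q(G;X) is nonzero and all of its complex roots are real. -/

import Mathlib

open Polynomial

noncomputable def numEdges {n : ℕ} (G : SimpleGraph (Fin n)) : ℕ := G.edgeSet.ncard

noncomputable def numComponents {n : ℕ} (G : SimpleGraph (Fin n)) : ℕ :=
  Nat.card G.ConnectedComponent

def GraphSimilar {n₁ n₂ : ℕ} (G₁ : SimpleGraph (Fin n₁)) (G₂ : SimpleGraph (Fin n₂)) : Prop :=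
  n₁ = n₂ ∧ numEdges G₁ = numEdges G₂ ∧ numComponents G₁ = numComponents G₂

def IsGraphPolynomial (P : ∀ n : ℕ, SimpleGraph (Fin n) → Polynomial ℤ) : Prop :=
  ∀ (n : ℕ) (G H : SimpleGraph (Fin n)), Nonempty (G ≃g H) → P n G = P n H

def DPEquiv (P Q : ∀ n : ℕ, SimpleGraph (Fin n) → Polynomial ℤ) : Prop :=
  ∀ (n₁ n₂ : ℕ) (G₁ : SimpleGraph (Fin n₁)) (G₂ : SimpleGraph (Fin n₂)),
    GraphSimilar G₁ G₂ → (P n₁ G₁ = P n₂ G₂ ↔ Q n₁ G₁ = Q n₂ G₂)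

/-- An injective encoding of a pair (index, coefficient) into an integer. -/
def encPair (i : ℕ) (c : ℤ) : ℤ := (Nat.pair i (Encodable.encode c) : ℤ)

lemma encPair_inj {i j : ℕ} {a b : ℤ} (h : encPair i a = encPair j b) : i = j ∧ a = b := by
  unfold encPair at h
  have h' : Nat.pair i (Encodable.encode a) = Nat.pair j (Encodable.encode b) :=
    Int.natCast_inj.mp h
  rw [Nat.pair_eq_pair] at h'
  exact ⟨h'.1, Encodable.encode_injective h'.2⟩

lemma key_prod_eq (t : ℕ) (c c' : ℕ → ℤ)
    (h : (∏ i ∈ Finset.range (t + 1), (X - C (encPair i (c i))))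
       = ∏ i ∈ Finset.range (t + 1), (X - C (encPair i (c' i)))) :
    ∀ i ≤ t, c i = c' i := by
  have h1 : ∀ d : ℕ → ℤ,
      (∏ i ∈ Finset.range (t + 1), (X - C (encPair i (d i))))
        = (((Finset.range (t + 1)).val.map fun i => encPair i (d i)).map
            fun a => X - C a).prod := by
    intro d
    rw [Multiset.map_map, Finset.prod_eq_multiset_prod]
    rfl
  have hroots := congrArg Polynomial.roots h
  rw [h1 c, h1 c', roots_multiset_prod_X_sub_C, roots_multiset_prod_X_sub_C] at hroots
  intro i hi
  have hmem : encPair i (c i) ∈ (Finset.range (t + 1)).val.map fun j => encPair j (c j) :=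
    Multiset.mem_map_of_mem _ (Finset.mem_range.mpr (Nat.lt_succ_of_le hi))
  rw [hroots] at hmem
  obtain ⟨j, _, hj⟩ := Multiset.mem_map.mp hmem
  obtain ⟨hji, hcc⟩ := encPair_inj hj
  rw [← hji] at hcc ⊢
  exact hcc.symm

/-- For an ℕ-valued similarity function s and a graph polynomial P with
integer coefficients of degree at most s(G), there is a d.p.-equivalent graph polynomial Q
with integer coefficients such that Q(G;X) is nonzero and all its complex roots are real. -/
theorem stmt_10 (s : ∀ n : ℕ, SimpleGraph (Fin n) → ℕ)
    (hs : ∀ (n₁ n₂ : ℕ) (G₁ : SimpleGraph (Fin n₁)) (G₂ : SimpleGraph (Fin n₂)),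
        GraphSimilar G₁ G₂ → s n₁ G₁ = s n₂ G₂)
    (P : ∀ n : ℕ, SimpleGraph (Fin n) → Polynomial ℤ)
    (hP : IsGraphPolynomial P)
    (hdeg : ∀ (n : ℕ) (G : SimpleGraph (Fin n)), (P n G).natDegree ≤ s n G) :
    ∃ Q : ∀ n : ℕ, SimpleGraph (Fin n) → Polynomial ℤ,
      IsGraphPolynomial Q ∧ DPEquiv P Q ∧
      ∀ (n : ℕ) (G : SimpleGraph (Fin n)),
        Q n G ≠ 0 ∧ ∀ z : ℂ, aeval z (Q n G) = 0 → ∃ x : ℝ, z = (x : ℂ) := by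
  refine ⟨fun n G => ∏ i ∈ Finset.range (s n G + 1), (X - C (encPair i ((P n G).coeff i))),
    ?_, ?_, ?_⟩
  · -- IsGraphPolynomial
    intro n G H ⟨φ⟩
    dsimp only
    have hsim : GraphSimilar G H := by
      refine ⟨rfl, ?_, ?_⟩
      · simpa [numEdges, ← Nat.card_coe_set_eq] using Nat.card_congr φ.mapEdgeSet
      · exact Nat.card_congr φ.connectedComponentEquiv
    rw [hP n G H ⟨φ⟩, hs n n G H hsim]
  · -- DPEquiv
    intro n₁ n₂ G₁ G₂ hsim
    have hss := hs n₁ n₂ G₁ G₂ hsim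
    dsimp only
    constructor
    · intro hPeq; rw [hPeq, hss]
    · intro hQeq
      rw [hss] at hQeq
      have hc := key_prod_eq (s n₂ G₂) _ _ hQeq
      apply Polynomial.ext
      intro i
      by_cases hi : i ≤ s n₂ G₂
      · exact hc i hi
      · push_neg at hi
        rw [coeff_eq_zero_of_natDegree_lt (lt_of_le_of_lt ((hdeg n₁ G₁).trans hss.le) hi),
          coeff_eq_zero_of_natDegree_lt (lt_of_le_of_lt (hdeg n₂ G₂) hi)]
  · -- nonzero and real roots
    intro n G
    constructor
    · exact (monic_prod_of_monic _ _ fun i _ => monic_X_sub_C _).ne_zero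
    · intro z hz
      rw [map_prod] at hz
      obtain ⟨i, _, hi⟩ := Finset.prod_eq_zero_iff.mp hz
      rw [map_sub, aeval_X, aeval_C] at hi
      refine ⟨(encPair i ((P n G).coeff i) : ℝ), ?_⟩
      rw [sub_eq_zero] at hi
      rw [hi]; push_cast
      exact map_intCast (algebraMap ℤ ℂ) _
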